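/- Let a, b, d be positive integers with gcd(a, b, d) = 1, and let R, S ≥ 1 be real. The number of pairs of positive integers (r, s) with r ≤ R, s ≤ S, and a·r ≡ b·s (mod d) is at most R·S/d + √(R·S). -/

import Mathlib

open Finset

-- AP count lemma
lemma card_cong_le (b d : ℕ) (hb : 0 < b) (hd : 0 < d) (c N : ℕ) :
    ((Finset.Icc 1 N).filter (fun s => c = b * s % d)).card ≤ N / (d / Nat.gcd b d) + 1 := by
  set g := Nat.gcd b d with hg
  have hgpos : 0 < g := Nat.gcd_pos_of_pos_left d hb
  have hgd : g ∣ d := Nat.gcd_dvd_right b d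
  set d' := d / g with hd'def
  have hd'pos : 0 < d' := Nat.div_pos (Nat.le_of_dvd hd hgd) hgpos
  have hdd : g * d' = d := Nat.mul_div_cancel' hgd
  have hbb : g * (b / g) = b := Nat.mul_div_cancel' (Nat.gcd_dvd_left b d)
  have hcop : Nat.Coprime d' (b / g) := (Nat.coprime_div_gcd_div_gcd hgpos).symm
  have key : ∀ s ∈ (Finset.Icc 1 N).filter (fun s => c = b * s % d),
      ∀ t ∈ (Finset.Icc 1 N).filter (fun s => c = b * s % d), s ≤ t → d' ∣ t - s := by
    intro s hs t ht hst
    simp only [Finset.mem_filter, Finset.mem_Icc] at hs ht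
    have h1 : b * s % d = b * t % d := by rw [← hs.2, ← ht.2]
    have h2 : d ∣ b * t - b * s := (Nat.modEq_iff_dvd' (Nat.mul_le_mul_left b hst)).mp h1
    have h3 : d' ∣ (b / g) * (t - s) := by
      have h4 : g * d' ∣ g * ((b / g) * (t - s)) := by
        rw [hdd, ← Nat.mul_assoc, hbb, Nat.mul_sub]
        exact h2
      exact (Nat.mul_dvd_mul_iff_left hgpos).mp h4
    exact hcop.dvd_of_dvd_mul_left h3
  have hmap : ∀ s ∈ (Finset.Icc 1 N).filter (fun s => c = b * s % d),
      (s - 1) / d' ∈ Finset.range (N / d' + 1) := by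
    intro s hs
    simp only [Finset.mem_filter, Finset.mem_Icc] at hs
    simp only [Finset.mem_range, Nat.lt_succ_iff]
    exact Nat.div_le_div_right (Nat.le_trans (Nat.sub_le s 1) hs.1.2)
  have hinj : ∀ s ∈ (Finset.Icc 1 N).filter (fun s => c = b * s % d),
      ∀ t ∈ (Finset.Icc 1 N).filter (fun s => c = b * s % d),
      (s - 1) / d' = (t - 1) / d' → s = t := by
    intro s hs t ht heq
    have h1s : 1 ≤ s := (Finset.mem_Icc.mp (Finset.mem_of_mem_filter s hs)).1
    have h1t : 1 ≤ t := (Finset.mem_Icc.mp (Finset.mem_of_mem_filter t ht)).1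
    rcases Nat.le_total s t with h | h
    · have hdvd := key s hs t ht h
      by_contra hne
      have hlt : s < t := lt_of_le_of_ne h hne
      have hge : d' ≤ t - s := Nat.le_of_dvd (by omega) hdvd
      have h5 : s - 1 + d' ≤ t - 1 := by omega
      have h6 : (s - 1 + d') / d' ≤ (t - 1) / d' := Nat.div_le_div_right h5
      rw [Nat.add_div_right _ hd'pos, heq] at h6
      omega
    · have hdvd := key t ht s hs h
      by_contra hne
      have hlt : t < s := lt_of_le_of_ne h (Ne.symm hne)
      have hge : d' ≤ s - t := Nat.le_of_dvd (by omega) hdvd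
      have h5 : t - 1 + d' ≤ s - 1 := by omega
      have h6 : (t - 1 + d') / d' ≤ (s - 1) / d' := Nat.div_le_div_right h5
      rw [Nat.add_div_right _ hd'pos, ← heq] at h6
      omega
  calc ((Finset.Icc 1 N).filter (fun s => c = b * s % d)).card
      ≤ (Finset.range (N / d' + 1)).card :=
        Finset.card_le_card_of_injOn _ hmap hinj
    _ = N / d' + 1 := Finset.card_range _

-- count of multiples
lemma card_mult_le (g M : ℕ) (hg : 0 < g) :
    ((Finset.Icc 1 M).filter (fun r => g ∣ r)).card ≤ M / g := by
  have := Finset.card_le_card_of_injOn (fun r => r / g)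
    (s := (Finset.Icc 1 M).filter (fun r => g ∣ r)) (t := Finset.Icc 1 (M / g))
    (by
      intro r hr
      simp only [Finset.mem_coe, Finset.mem_filter, Finset.mem_Icc] at hr
      simp only [Finset.mem_coe, Finset.mem_Icc]
      exact ⟨Nat.one_le_div_iff hg |>.mpr (Nat.le_of_dvd (by omega) hr.2),
        Nat.div_le_div_right hr.1.2⟩)
    (by
      intro r hr t ht heq
      simp only [Finset.mem_coe, Finset.mem_filter] at hr ht
      have heq' : r / g = t / g := heq
      have h1 : r / g * g = r := Nat.div_mul_cancel hr.2
      have h2 : t / g * g = t := Nat.div_mul_cancel ht.2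
      rw [← h1, ← h2, heq'])
  exact this.trans (by simp)

lemma count_le (a b d : ℕ) (hb : 0 < b) (hd : 0 < d)
    (hgcd : Nat.Coprime a (Nat.gcd b d)) (M N : ℕ) :
    (((Finset.Icc 1 M ×ˢ Finset.Icc 1 N).filter
        (fun p : ℕ × ℕ => a * p.1 % d = b * p.2 % d)).card)
      ≤ (M / Nat.gcd b d) * (N / (d / Nat.gcd b d) + 1) := by
  set g := Nat.gcd b d with hg
  have hgpos : 0 < g := Nat.gcd_pos_of_pos_left d hb
  have hsum : ((Finset.Icc 1 M ×ˢ Finset.Icc 1 N).filter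
        (fun p : ℕ × ℕ => a * p.1 % d = b * p.2 % d)).card
      = ∑ r ∈ Finset.Icc 1 M, ((Finset.Icc 1 N).filter
          (fun s => a * r % d = b * s % d)).card := by
    simp only [Finset.card_filter]
    rw [Finset.sum_product]
  rw [hsum]
  have hzero : ∀ r ∈ Finset.Icc 1 M, r ∉ (Finset.Icc 1 M).filter (fun r => g ∣ r) →
      ((Finset.Icc 1 N).filter (fun s => a * r % d = b * s % d)).card = 0 := by
    intro r hr hndvd
    simp only [Finset.mem_filter, hr, true_and] at hndvd
    rw [Finset.card_eq_zero, Finset.filter_eq_empty_iff]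
    intro s _ hc
    apply hndvd
    have hmod : a * r ≡ b * s [MOD d] := hc
    have hmodg : a * r ≡ b * s [MOD g] := hmod.of_dvd (Nat.gcd_dvd_right b d)
    have h0 : b * s ≡ 0 [MOD g] := Nat.modEq_zero_iff_dvd.mpr
      (Dvd.dvd.mul_right (Nat.gcd_dvd_left b d) s)
    have hdv : g ∣ a * r := Nat.modEq_zero_iff_dvd.mp (hmodg.trans h0)
    exact hgcd.symm.dvd_of_dvd_mul_left hdv
  calc ∑ r ∈ Finset.Icc 1 M,
        ((Finset.Icc 1 N).filter (fun s => a * r % d = b * s % d)).card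
      = ∑ r ∈ (Finset.Icc 1 M).filter (fun r => g ∣ r),
        ((Finset.Icc 1 N).filter (fun s => a * r % d = b * s % d)).card :=
        (Finset.sum_subset (Finset.filter_subset _ _) hzero).symm
    _ ≤ ∑ _r ∈ (Finset.Icc 1 M).filter (fun r => g ∣ r), (N / (d / g) + 1) :=
        Finset.sum_le_sum (fun r _ => card_cong_le b d hb hd (a * r % d) N)
    _ = ((Finset.Icc 1 M).filter (fun r => g ∣ r)).card * (N / (d / g) + 1) := by
        rw [Finset.sum_const, smul_eq_mul]
    _ ≤ (M / g) * (N / (d / g) + 1) :=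
        Nat.mul_le_mul_right _ (card_mult_le g M hgpos)

lemma aux_real (a b d : ℕ) (hb : 0 < b) (hd : 0 < d)
    (hgcd : Nat.Coprime a (Nat.gcd b d)) (R S : ℝ) (hR : 0 ≤ R) (hS : 0 ≤ S) :
    ((((Finset.Icc 1 ⌊R⌋₊) ×ˢ (Finset.Icc 1 ⌊S⌋₊)).filter
        (fun p : ℕ × ℕ => a * p.1 % d = b * p.2 % d)).card : ℝ)
      ≤ R * S / d + R := by
  set g := Nat.gcd b d with hg
  have hgpos : 0 < g := Nat.gcd_pos_of_pos_left d hb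
  have hgd : g ∣ d := Nat.gcd_dvd_right b d
  set d' := d / g with hd'def
  have hd'pos : 0 < d' := Nat.div_pos (Nat.le_of_dvd hd hgd) hgpos
  have hdd : (g : ℝ) * (d' : ℝ) = d := by
    rw [← Nat.cast_mul, Nat.mul_div_cancel' hgd]
  have h1 : ((((Finset.Icc 1 ⌊R⌋₊) ×ˢ (Finset.Icc 1 ⌊S⌋₊)).filter
        (fun p : ℕ × ℕ => a * p.1 % d = b * p.2 % d)).card : ℝ)
      ≤ ((⌊R⌋₊ / g * (⌊S⌋₊ / d' + 1) : ℕ) : ℝ) :=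
    Nat.cast_le.mpr (count_le a b d hb hd hgcd ⌊R⌋₊ ⌊S⌋₊)
  refine h1.trans ?_
  have h2 : ((⌊R⌋₊ / g : ℕ) : ℝ) ≤ R / g := by
    refine (Nat.cast_div_le).trans ?_
    gcongr
    exact Nat.floor_le hR
  have h3 : ((⌊S⌋₊ / d' : ℕ) : ℝ) ≤ S / d' := by
    refine (Nat.cast_div_le).trans ?_
    gcongr
    exact Nat.floor_le hS
  have h4 : ((⌊R⌋₊ / g * (⌊S⌋₊ / d' + 1) : ℕ) : ℝ)
      ≤ (R / g) * (S / d' + 1) := by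
    rw [Nat.cast_mul, Nat.cast_add, Nat.cast_one]
    exact mul_le_mul h2 (by linarith) (by positivity) (by positivity)
  refine h4.trans ?_
  have expand : R / g * (S / d' + 1) = R * S / ((g : ℝ) * d') + R / g := by
    field_simp
  rw [expand, hdd]
  have h5 : R / g ≤ R := by
    apply div_le_self hR
    exact_mod_cast hgpos
  linarith



/-- Let `a, b, d` be positive integers with `gcd(a,b,d) = 1` and `R, S ≥ 1` real.
The number of pairs of positive integers `(r,s)` with `r ≤ R`, `s ≤ S` and
`a r ≡ b s (mod d)` is at most `RS/d + √(RS)`. -/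
theorem stmt5 (a b d : ℕ) (ha : 0 < a) (hb : 0 < b) (hd : 0 < d)
    (hgcd : Nat.gcd a (Nat.gcd b d) = 1) (R S : ℝ) (hR : 1 ≤ R) (hS : 1 ≤ S) :
    ((((Finset.Icc 1 ⌊R⌋₊) ×ˢ (Finset.Icc 1 ⌊S⌋₊)).filter
        (fun p : ℕ × ℕ => a * p.1 % d = b * p.2 % d)).card : ℝ)
      ≤ R * S / d + Real.sqrt (R * S) := by

  have hR0 : (0 : ℝ) ≤ R := by linarith
  have hS0 : (0 : ℝ) ≤ S := by linarith
  rcases le_total R S with h | h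
  · have hmain := aux_real a b d hb hd hgcd R S hR0 hS0
    have hsq : R ≤ Real.sqrt (R * S) := by
      calc R = Real.sqrt (R * R) := (Real.sqrt_mul_self hR0).symm
        _ ≤ Real.sqrt (R * S) := Real.sqrt_le_sqrt (by nlinarith)
    linarith
  · have hgcd' : Nat.gcd b (Nat.gcd a d) = 1 := by
      rw [← Nat.gcd_assoc, Nat.gcd_comm b a, Nat.gcd_assoc]; exact hgcd
    have hswap : (((Finset.Icc 1 ⌊R⌋₊) ×ˢ (Finset.Icc 1 ⌊S⌋₊)).filter
          (fun p : ℕ × ℕ => a * p.1 % d = b * p.2 % d)).card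
        = (((Finset.Icc 1 ⌊S⌋₊) ×ˢ (Finset.Icc 1 ⌊R⌋₊)).filter
          (fun p : ℕ × ℕ => b * p.1 % d = a * p.2 % d)).card := by
      apply Finset.card_bij' (fun p _ => p.swap) (fun p _ => p.swap)
      · intro p hp
        simp
      · intro p hp
        simp
      · intro p hp
        simp only [Finset.mem_filter, Finset.mem_product] at hp ⊢
        exact ⟨⟨hp.1.2, hp.1.1⟩, hp.2.symm⟩
      · intro p hp
        simp only [Finset.mem_filter, Finset.mem_product] at hp ⊢
        exact ⟨⟨hp.1.2, hp.1.1⟩, hp.2.symm⟩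
    have hmain := aux_real b a d ha hd hgcd' S R hS0 hR0
    rw [hswap]
    have hsq : S ≤ Real.sqrt (R * S) := by
      calc S = Real.sqrt (S * S) := (Real.sqrt_mul_self hS0).symm
        _ ≤ Real.sqrt (R * S) := Real.sqrt_le_sqrt (by nlinarith)
    have : S * R / d = R * S / d := by ring
    linarith
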